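/- (Downstream unbiasedness in regressing Ŷ^OCR on W.) Let Ŷ be a square-integrable random variable satisfying the outcome-calibration condition E[Ŷ | σ(Y)] = Y almost surely, and suppose W and Ŷ − Y are conditionally independent given σ(Y). Assume Var(W) > 0. Then Cov(Ŷ, W) = Cov(Y, W), and hence the population regression coefficient of Ŷ on W recovers the true coefficient: Cov(Ŷ, W)/Var(W) = Cov(Y, W)/Var(W) = θ. -/

import Mathlib

open MeasureTheory ProbabilityTheory Set

/-- Population covariance of two real random variables. -/
noncomputable def covar {Ω : Type*} {mΩ : MeasurableSpace Ω} (μ : Measure Ω) (f g : Ω → ℝ) : ℝ :=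
  ∫ ω, (f ω - ∫ ω', f ω' ∂μ) * (g ω - ∫ ω', g ω' ∂μ) ∂μ


/-- Two L² functions have integrable product. -/
lemma memLp_two_integrable_mul {Ω : Type*} {mΩ : MeasurableSpace Ω} {μ : Measure Ω}
    {f g : Ω → ℝ} (hf : MemLp f 2 μ) (hg : MemLp g 2 μ) :
    Integrable (fun ω => f ω * g ω) μ := by
  have h : MemLp (f • g) 1 μ := haveI : ENNReal.HolderTriple 2 2 1 := ⟨by norm_num [ENNReal.inv_two_add_inv_two]⟩; hg.smul hf (p := 2) (q := 2) (r := 1)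
  rw [memLp_one_iff_integrable] at h
  simpa [Pi.smul_apply, smul_eq_mul, Pi.mul_def] using h

/-- Kernel independence of two real-valued measurable functions gives a.e. pointwise
independence. -/
lemma kernel_indepFun_ae_indepFun {α Ω : Type*} {mα : MeasurableSpace α}
    {mΩ : MeasurableSpace Ω} {κ : ProbabilityTheory.Kernel α Ω} [IsMarkovKernel κ]
    {μ : Measure α} {f g : Ω → ℝ} (hf : Measurable f) (hg : Measurable g)
    (h : ProbabilityTheory.Kernel.IndepFun f g κ μ) :
    ∀ᵐ a ∂μ, IndepFun f g (κ a) := by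
  rw [Kernel.indepFun_iff_measure_inter_preimage_eq_mul] at h
  have h' : ∀ᵐ a ∂μ, ∀ q r : ℚ, κ a (f ⁻¹' Iic (q : ℝ) ∩ g ⁻¹' Iic (r : ℝ))
      = κ a (f ⁻¹' Iic (q : ℝ)) * κ a (g ⁻¹' Iic (r : ℝ)) := by
    rw [ae_all_iff]
    intro q
    rw [ae_all_iff]
    intro r
    exact h _ _ measurableSet_Iic measurableSet_Iic
  filter_upwards [h'] with a ha
  have hBorel : (inferInstance : MeasurableSpace ℝ) = borel ℝ := BorelSpace.measurable_eq
  set S : Set (Set ℝ) := ⋃ q : ℚ, {Iic (q : ℝ)} with hS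
  have hgen : ∀ (φ : Ω → ℝ), MeasurableSpace.comap φ inferInstance
      = MeasurableSpace.generateFrom {s : Set Ω | ∃ t ∈ S, φ ⁻¹' t = s} := by
    intro φ
    conv_lhs => rw [hBorel, Real.borel_eq_generateFrom_Iic_rat]
    rw [MeasurableSpace.comap_generateFrom]
    rfl
  have hsets : IndepSets {s : Set Ω | ∃ t ∈ S, f ⁻¹' t = s}
      {s : Set Ω | ∃ t ∈ S, g ⁻¹' t = s} (κ a) := by
    rintro t1 t2 ⟨s1, hs1, rfl⟩ ⟨s2, hs2, rfl⟩
    simp only [hS, mem_iUnion, mem_singleton_iff] at hs1 hs2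
    obtain ⟨q, rfl⟩ := hs1
    obtain ⟨r, rfl⟩ := hs2
    exact Filter.Eventually.of_forall fun _ => ha q r
  exact IndepSets.indep (measurable_iff_comap_le.mp hf) (measurable_iff_comap_le.mp hg)
    (Real.isPiSystem_Iic_rat.comap f) (Real.isPiSystem_Iic_rat.comap g) (hgen f) (hgen g) hsets

/-- μ-null sets are null for the conditional expectation kernel, trim-a.e. -/
lemma condExpKernel_null_of_null {Ω : Type*} {m : MeasurableSpace Ω}
    [m0 : MeasurableSpace Ω] [StandardBorelSpace Ω]
    (μ : Measure Ω) [IsFiniteMeasure μ] (hm : m ≤ m0)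
    {N : Set Ω} (hN : μ N = 0) :
    ∀ᵐ ω ∂(μ.trim hm), (condExpKernel (mΩ := m0) μ m) ω N = 0 := by
  obtain ⟨N', hNN', hNm, hN0⟩ := exists_measurable_superset_of_null hN
  have h1 := condExpKernel_ae_eq_trim_condExp (μ := μ) hm hNm
  have h2 : (μ⟦N' | m⟧) =ᵐ[μ] 0 := by
    have hind : N'.indicator (fun _ => (1 : ℝ)) =ᵐ[μ] 0 := by
      have hae : ∀ᵐ ω ∂μ, ω ∉ N' := by
        rw [ae_iff]
        simpa using hN0
      filter_upwards [hae] with ω hω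
      simp [Set.indicator_of_notMem hω]
    exact (condExp_congr_ae hind).trans (by rw [condExp_zero])
  have h2' : (μ⟦N' | m⟧) =ᵐ[μ.trim hm] 0 :=
    (stronglyMeasurable_condExp.ae_eq_trim_iff hm stronglyMeasurable_zero).mpr h2
  filter_upwards [h1.trans h2'] with ω hω
  
  have hNz : (condExpKernel (mΩ := m0) μ m) ω N' = 0 := by
    have := hω
    simp only [Pi.zero_apply, ENNReal.toReal_eq_zero_iff] at this
    exact (measureReal_eq_zero_iff (measure_ne_top _ _)).mp this
  exact measure_mono_null hNN' hNz

lemma ocr_covar_eq {Ω : Type*} {mY : MeasurableSpace Ω}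
    [m0 : MeasurableSpace Ω] [StandardBorelSpace Ω]
    (μ : Measure Ω) [IsProbabilityMeasure μ]
    (Y W Yhat : Ω → ℝ)
    (hYL2 : MemLp Y 2 μ) (hWL2 : MemLp W 2 μ) (hYhatL2 : MemLp Yhat 2 μ)
    (hYmeas : Measurable Y)
    (hmY : mY = MeasurableSpace.comap Y inferInstance)
    (hmY_le : mY ≤ m0)
    (hcal : μ[Yhat | mY] =ᵐ[μ] Y)
    (hcondindep : CondIndepFun (mΩ := m0) mY hmY_le W (fun ω => Yhat ω - Y ω) μ) :
    covar μ Yhat W = covar μ Y W := by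
  set D : Ω → ℝ := fun ω => Yhat ω - Y ω with hD
  have hYint : Integrable Y μ := hYL2.integrable one_le_two
  have hWint : Integrable W μ := hWL2.integrable one_le_two
  have hYhatint : Integrable Yhat μ := hYhatL2.integrable one_le_two
  have hDint : Integrable D μ := hYhatint.sub hYint
  set W' : Ω → ℝ := hWL2.1.mk W with hW'
  set Yhat' : Ω → ℝ := hYhatL2.1.mk Yhat with hYhat'
  set D' : Ω → ℝ := fun ω => Yhat' ω - Y ω with hD'
  have hWW' : W =ᵐ[μ] W' := hWL2.1.ae_eq_mk
  have hYY' : Yhat =ᵐ[μ] Yhat' := hYhatL2.1.ae_eq_mk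
  have hDD' : D =ᵐ[μ] D' := by filter_upwards [hYY'] with ω h; simp [hD, hD', h]
  have hW'meas : Measurable W' := hWL2.1.stronglyMeasurable_mk.measurable
  have hD'meas : Measurable D' := (hYhatL2.1.stronglyMeasurable_mk.measurable).sub hYmeas
  have hW'L2 : MemLp W' 2 μ := hWL2.ae_eq hWW'
  have hD'L2 : MemLp D' 2 μ := (hYhatL2.sub hYL2).ae_eq hDD'
  have hW'int : Integrable W' μ := hW'L2.integrable one_le_two
  have hD'int : Integrable D' μ := hD'L2.integrable one_le_two
  have hWD'int : Integrable (fun ω => W' ω * D' ω) μ := memLp_two_integrable_mul hW'L2 hD'L2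
  have hYsm : StronglyMeasurable[mY] Y := by
    rw [hmY]; exact (measurable_iff_comap_le.mpr le_rfl).stronglyMeasurable
  have hcondY : μ[Y | mY] = Y := condExp_of_stronglyMeasurable hmY_le hYsm hYint
  have hcondD : μ[D | mY] =ᵐ[μ] 0 := by
    have h1 : μ[D | mY] =ᵐ[μ] μ[Yhat | mY] - μ[Y | mY] := condExp_sub hYhatint hYint _
    filter_upwards [h1, hcal] with ω h1ω h2ω
    simp [h1ω, hcondY, h2ω]
  have hcondD' : μ[D' | mY] =ᵐ[μ] 0 := (condExp_congr_ae hDD'.symm).trans hcondD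
  have hED : ∫ ω, D ω ∂μ = 0 := by
    rw [← integral_condExp hmY_le (f := D), integral_congr_ae hcondD]
    simp
  set κ := condExpKernel (mΩ := m0) μ mY with hκ
  have hWae : ∀ᵐ ω ∂(μ.trim hmY_le), W =ᵐ[κ ω] W' := by
    have hnull := condExpKernel_null_of_null μ hmY_le (N := {ω | ¬ W ω = W' ω}) (ae_iff.mp hWW')
    filter_upwards [hnull] with ω hω
    exact ae_iff.mpr hω
  have hDae : ∀ᵐ ω ∂(μ.trim hmY_le), D =ᵐ[κ ω] D' := by
    have hnull := condExpKernel_null_of_null μ hmY_le (N := {ω | ¬ D ω = D' ω}) (ae_iff.mp hDD')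
    filter_upwards [hnull] with ω hω
    exact ae_iff.mpr hω
  have hker : Kernel.IndepFun W' D' κ (μ.trim hmY_le) :=
    Kernel.IndepFun.congr' hcondindep hWae hDae
  have hindep : ∀ᵐ ω ∂μ, IndepFun W' D' (κ ω) :=
    ae_of_ae_trim hmY_le (kernel_indepFun_ae_indepFun hW'meas hD'meas hker)
  have hcondWD : μ[(fun ω => W' ω * D' ω) | mY] =ᵐ[μ] 0 := by
    have e1 := condExp_ae_eq_integral_condExpKernel (μ := μ) hmY_le hWD'int
    have e3 := condExp_ae_eq_integral_condExpKernel (μ := μ) hmY_le hW'int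
    have e4 := condExp_ae_eq_integral_condExpKernel (μ := μ) hmY_le hD'int
    filter_upwards [e1, e3, e4, hindep, hcondD'] with ω h1 h3 h4 h5 h6
    have hmul : ∫ y, W' y * D' y ∂(κ ω) = (∫ y, W' y ∂(κ ω)) * ∫ y, D' y ∂(κ ω) := by
      have := IndepFun.integral_mul_eq_mul_integral (μ := κ ω) h5 hW'meas.aestronglyMeasurable hD'meas.aestronglyMeasurable
      simpa [Pi.mul_apply] using this
    calc (μ[(fun ω => W' ω * D' ω) | mY]) ω
        = ∫ y, W' y * D' y ∂(κ ω) := h1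
      _ = (∫ y, W' y ∂(κ ω)) * ∫ y, D' y ∂(κ ω) := hmul
      _ = (μ[W' | mY]) ω * (μ[D' | mY]) ω := by rw [h3, h4]
      _ = 0 := by rw [h6]; simp
  have hEWD' : ∫ ω, W' ω * D' ω ∂μ = 0 := by
    rw [← integral_condExp hmY_le (f := fun ω => W' ω * D' ω), integral_congr_ae hcondWD]
    simp
  have hEWD : ∫ ω, D ω * W ω ∂μ = 0 := by
    have hcongr : (fun ω => D ω * W ω) =ᵐ[μ] fun ω => W' ω * D' ω := by
      filter_upwards [hWW', hDD'] with ω h1 h2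
      rw [h2, h1, mul_comm]
    rw [integral_congr_ae hcongr]
    exact hEWD'
  have hEYhat : ∫ ω, Yhat ω ∂μ = ∫ ω, Y ω ∂μ := by
    have h := integral_sub hYhatint hYint
    have h2 : ∫ ω, (Yhat ω - Y ω) ∂μ = 0 := hED
    rw [h] at h2
    linarith
  set b := ∫ ω, W ω ∂μ with hb
  set c := ∫ ω, Y ω ∂μ with hc
  simp only [covar, hEYhat]
  have hiA : Integrable (fun ω => (Y ω - c) * (W ω - b)) μ :=
    memLp_two_integrable_mul (hYL2.sub (memLp_const c)) (hWL2.sub (memLp_const b))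
  have hiB : Integrable (fun ω => D ω * W ω) μ :=
    memLp_two_integrable_mul (hYhatL2.sub hYL2) hWL2
  have hpt : (fun ω => (Yhat ω - c) * (W ω - b))
      = fun ω => (Y ω - c) * (W ω - b) + (D ω * W ω - b * D ω) := by
    funext ω; simp only [hD]; ring
  have hiC2 : Integrable (fun ω => b * D ω) μ := hDint.const_mul b
  have hiC : Integrable (fun ω => D ω * W ω - b * D ω) μ := hiB.sub hiC2
  rw [hpt, integral_add hiA hiC, integral_sub hiB hiC2, hEWD, integral_const_mul, hED,
    ← hb, ← hc]
  ring

/-- Downstream unbiasedness in regressing `Ŷ^OCR` on `W`: if `Ŷ` is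
square-integrable with `E[Ŷ | σ(Y)] = Y` a.s. (outcome calibration), `W` and `Ŷ − Y` are
conditionally independent given `σ(Y)`, and `Var(W) > 0`, then `Cov(Ŷ, W) = Cov(Y, W)` and
hence `Cov(Ŷ, W)/Var(W) = Cov(Y, W)/Var(W) = θ`. -/
theorem ocr_downstream_unbiasedness
    {Ω : Type*} [m0 : MeasurableSpace Ω] [StandardBorelSpace Ω]
    (μ : Measure Ω) [IsProbabilityMeasure μ]
    (Y W Yhat : Ω → ℝ)
    (hYL2 : MemLp Y 2 μ) (hWL2 : MemLp W 2 μ) (hYhatL2 : MemLp Yhat 2 μ)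
    (hYmeas : Measurable Y)
    (mY : MeasurableSpace Ω) (hmY : mY = MeasurableSpace.comap Y inferInstance)
    (hmY_le : mY ≤ m0)
    (hcal : μ[Yhat | mY] =ᵐ[μ] Y)
    (hcondindep : CondIndepFun (mΩ := m0) mY hmY_le W (fun ω => Yhat ω - Y ω) μ)
    (hVarW : 0 < variance W μ)
    (θ : ℝ) (hθ : θ = covar μ Y W / variance W μ) :
    covar μ Yhat W = covar μ Y W ∧ covar μ Yhat W / variance W μ = θ := by
  have key := ocr_covar_eq (mY := mY) (m0 := m0) μ Y W Yhat hYL2 hWL2 hYhatL2 hYmeas hmY hmY_le hcal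
    hcondindep
  exact ⟨key, by rw [key, hθ]⟩
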